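/- Let $B_1 \subseteq B_0$ be Banach spaces with continuous embedding, $B_1$ dense in $B_0$, and let $R\colon B_0 \to B_0$ be a linear operator with $R(B_1)\subseteq B_1$ such that $R$ is compact as an endomorphism of $B_0$ and $R|_{B_1}$ is compact as an endomorphism of $B_1$. Then every $u \in B_0$ with $u + Ru = 0$ lies in $B_1$. -/

import Mathlib

open Filter Topology Set Metric

section Helpers

variable {E : Type*} [NormedAddCommGroup E] [NormedSpace ℝ E]

/-- Riesz lemma, with the witness inside a given subspace `G` containing `F`. -/
lemma riesz_in (G F : Submodule ℝ E) (hFc : IsClosed (F : Set E)) (hFG : F ≤ G)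
    (hne : ∃ x, x ∈ G ∧ x ∉ F) :
    ∃ x₀ : E, x₀ ∈ G ∧ ‖x₀‖ = 1 ∧ ∀ y ∈ F, (1:ℝ)/2 ≤ ‖x₀ - y‖ := by
  set F' : Submodule ℝ G := F.comap G.subtype with hF'
  have hF'c : IsClosed (F' : Set G) :=
    hFc.preimage continuous_subtype_val
  obtain ⟨x, hxG, hxF⟩ := hne
  have hne' : ∃ x : G, x ∉ F' := ⟨⟨x, hxG⟩, by simpa [hF', Submodule.mem_comap]⟩
  obtain ⟨x₀, hx₀, hdist⟩ := riesz_lemma hF'c hne' (show (1:ℝ)/2 < 1 by norm_num)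
  have hx₀ne : (x₀ : E) ≠ 0 := by
    intro h
    apply hx₀
    have : x₀ = 0 := Subtype.ext h
    simp [this, hF']
  have hn : ‖(x₀ : E)‖ ≠ 0 := norm_ne_zero_iff.mpr hx₀ne
  refine ⟨‖(x₀ : E)‖⁻¹ • (x₀ : E), G.smul_mem _ x₀.2, ?_, ?_⟩
  · simp [norm_smul, inv_mul_cancel₀ hn]
  · intro y hy
    have hy' : (⟨y, hFG hy⟩ : G) ∈ F' := by simpa [hF', Submodule.mem_comap]
    have hmem : ‖(x₀ : E)‖ • y ∈ G := G.smul_mem _ (hFG hy)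
    have h2 : (⟨‖(x₀ : E)‖ • y, hmem⟩ : G) ∈ F' := by
      simpa [hF', Submodule.mem_comap] using F.smul_mem ‖(x₀ : E)‖ hy
    have := hdist _ h2
    have hnorm : ‖x₀ - (⟨‖(x₀ : E)‖ • y, hmem⟩ : G)‖ = ‖(x₀ : E) - ‖(x₀ : E)‖ • y‖ := rfl
    rw [hnorm] at this
    have hpos : (0:ℝ) < ‖(x₀ : E)‖ := lt_of_le_of_ne (norm_nonneg _) (Ne.symm hn)
    have : (1:ℝ)/2 * ‖(x₀ : E)‖ ≤ ‖(x₀ : E) - ‖(x₀ : E)‖ • y‖ := this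
    calc (1:ℝ)/2 = ((1:ℝ)/2 * ‖(x₀ : E)‖) / ‖(x₀ : E)‖ := by field_simp
    _ ≤ ‖(x₀ : E) - ‖(x₀ : E)‖ • y‖ / ‖(x₀ : E)‖ := by
        gcongr
    _ = ‖‖(x₀ : E)‖⁻¹ • (x₀ : E) - y‖ := by
        have heq : ‖(x₀ : E)‖⁻¹ • (x₀ : E) - y = ‖(x₀ : E)‖⁻¹ • ((x₀ : E) - ‖(x₀ : E)‖ • y) := by
          rw [smul_sub, smul_smul, inv_mul_cancel₀ hn, one_smul]
        rw [heq, norm_smul, Real.norm_of_nonneg (inv_nonneg.mpr (norm_nonneg (x₀ : E))),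
          div_eq_inv_mul]

omit [NormedSpace ℝ E] in
/-- A `1/2`-separated sequence cannot live in a compact set. -/
lemma no_separated_seq_in_compact {x : ℕ → E} {K : Set E} (hK : IsCompact K)
    (hx : ∀ n, x n ∈ K) (hsep : ∀ m n, m < n → (1:ℝ)/2 ≤ ‖x m - x n‖) : False := by
  obtain ⟨a, -, φ, hφ, hconv⟩ := hK.tendsto_subseq hx
  have hc : CauchySeq (x ∘ φ) := hconv.cauchySeq
  obtain ⟨N, hN⟩ := Metric.cauchySeq_iff'.1 hc ((1:ℝ)/2) (by norm_num)
  have h1 := hN (N+1) (by omega)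
  have hlt : φ N < φ (N+1) := hφ (by omega)
  have hs := hsep _ _ hlt
  have hd : dist (x (φ (N+1))) (x (φ N)) < 1/2 := by simpa [Function.comp] using h1
  rw [dist_eq_norm, ← norm_neg] at hd
  simp only [neg_sub] at hd
  linarith

end Helpers

section RieszTheory

variable {E : Type*} [NormedAddCommGroup E] [NormedSpace ℝ E]

/-- Image of a closed ball under a CLM whose "compact part" hypothesis holds. -/
lemma compact_image_closedBall {S : E →L[ℝ] E} (hC : IsCompactOperator fun x => S x - x)
    (r : ℝ) : ∃ K : Set E, IsCompact K ∧ (fun x => S x - x) '' Metric.closedBall 0 r ⊆ K := by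
  have hC' : IsCompactOperator ⇑((S - 1 : E →L[ℝ] E).toLinearMap) := by
    have : ⇑((S - 1 : E →L[ℝ] E).toLinearMap) = fun x => S x - x := by
      funext x; simp
    rw [this]; exact hC
  obtain ⟨K, hK, hKsub⟩ := hC'.image_closedBall_subset_compact r
  refine ⟨K, hK, ?_⟩
  have : ⇑((S - 1 : E →L[ℝ] E).toLinearMap) = fun x => S x - x := by funext x; simp
  rwa [this] at hKsub

/-- The kernel of `S = 1 + compact` is finite dimensional. -/
lemma findim_ker_of_compact (S : E →L[ℝ] E) (hC : IsCompactOperator fun x => S x - x) :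
    FiniteDimensional ℝ (S.ker) := by
  obtain ⟨K, hK, hKsub⟩ := compact_image_closedBall hC 1
  have hcomp : IsCompact (Metric.closedBall (0 : S.ker) 1) := by
    rw [Topology.IsEmbedding.subtypeVal.isCompact_iff]
    have himg : Subtype.val '' (Metric.closedBall (0 : S.ker) 1) =
        (S.ker : Set E) ∩ Metric.closedBall 0 1 := by
      ext x
      constructor
      · rintro ⟨⟨y, hy⟩, hball, rfl⟩
        refine ⟨hy, ?_⟩
        simpa [Metric.mem_closedBall, dist_eq_norm] using hball
      · rintro ⟨hmem, hball⟩
        refine ⟨⟨x, hmem⟩, ?_, rfl⟩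
        simpa [Metric.mem_closedBall, dist_eq_norm] using hball
    have hsub : (S.ker : Set E) ∩ Metric.closedBall 0 1 ⊆ -K := by
      rintro x ⟨hmem, hball⟩
      have hx : S x = 0 := hmem
      have : S x - x ∈ K := hKsub ⟨x, hball, rfl⟩
      rw [hx, zero_sub] at this
      rwa [Set.mem_neg]
    rw [himg]
    exact hK.neg.of_isClosed_subset
      ((ContinuousLinearMap.isClosed_ker S).inter Metric.isClosed_closedBall) hsub
  exact FiniteDimensional.of_isCompact_closedBall₀ ℝ one_pos hcomp

end RieszTheory

section RieszTheory2

variable {E : Type*} [NormedAddCommGroup E] [NormedSpace ℝ E] [CompleteSpace E]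

/-- The range of `S = 1 + compact` is closed. -/
lemma closed_range_of_compact (S : E →L[ℝ] E) (hC : IsCompactOperator fun x => S x - x) :
    IsClosed (S.range : Set E) := by
  haveI := findim_ker_of_compact S hC
  obtain ⟨W, hWc, hWcompl⟩ :=
    (Submodule.ClosedComplemented.of_finiteDimensional (S.ker)).exists_isClosed_isCompl
  -- `S` is bounded below on `W`
  have hbelow : ∃ c : ℝ, 0 < c ∧ ∀ w ∈ W, c * ‖w‖ ≤ ‖S w‖ := by
    by_contra h
    push_neg at h
    have hv : ∀ n : ℕ, ∃ v : E, v ∈ W ∧ ‖v‖ = 1 ∧ ‖S v‖ < 1 / (n + 1) := by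
      intro n
      obtain ⟨w, hwW, hw⟩ := h (1 / (n + 1)) (by positivity)
      have hw0 : w ≠ 0 := by
        rintro rfl; simp at hw
      refine ⟨‖w‖⁻¹ • w, W.smul_mem _ hwW, ?_, ?_⟩
      · simp [norm_smul, inv_mul_cancel₀ (norm_ne_zero_iff.mpr hw0)]
      · rw [map_smul, norm_smul, norm_inv, norm_norm]
        rw [inv_mul_lt_iff₀ (norm_pos_iff.mpr hw0), mul_comm]
        exact hw
    choose v hvW hvn hvS using hv
    obtain ⟨K, hK, hKsub⟩ := compact_image_closedBall hC 1
    have hmem : ∀ n, S (v n) - v n ∈ K := fun n =>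
      hKsub ⟨v n, by simp [Metric.mem_closedBall, dist_eq_norm, (hvn n).le], rfl⟩
    obtain ⟨a, -, φ, hφ, hconv⟩ := hK.tendsto_subseq hmem
    have hS0 : Filter.Tendsto (fun n => S (v (φ n))) Filter.atTop (nhds 0) := by
      rw [tendsto_iff_norm_sub_tendsto_zero]
      apply squeeze_zero (fun n => by positivity) (g := fun n : ℕ => 1 / (n + 1 : ℝ))
      · intro n
        have := hvS (φ n)
        have hmono : n ≤ φ n := hφ.le_apply
        have hφn : (n : ℝ) + 1 ≤ (φ n : ℝ) + 1 := by
          linarith [(Nat.cast_le.mpr hmono : (n:ℝ) ≤ (φ n : ℝ))]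
        calc ‖S (v (φ n)) - 0‖ = ‖S (v (φ n))‖ := by simp
        _ ≤ 1 / ((φ n : ℝ) + 1) := (hvS (φ n)).le
        _ ≤ 1 / ((n : ℝ) + 1) := by
            apply one_div_le_one_div_of_le (by positivity) hφn
      · exact tendsto_one_div_add_atTop_nhds_zero_nat
    have hvlim : Filter.Tendsto (fun n => v (φ n)) Filter.atTop (nhds (-a)) := by
      have : (fun n => v (φ n)) = fun n => S (v (φ n)) - (S (v (φ n)) - v (φ n)) := by
        funext n; rw [sub_sub_cancel]
      rw [this]
      simpa using hS0.sub hconv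
    have haW : -a ∈ W := hWc.mem_of_tendsto hvlim (Filter.Eventually.of_forall fun n => hvW _)
    have hanorm : ‖-a‖ = 1 := by
      have := (continuous_norm.tendsto (-a)).comp hvlim
      have h1 : Filter.Tendsto (fun n => ‖v (φ n)‖) Filter.atTop (nhds ‖-a‖) := this
      have h2 : (fun n => ‖v (φ n)‖) = fun _ => (1:ℝ) := funext fun n => hvn _
      rw [h2] at h1
      exact (tendsto_const_nhds_iff.mp h1).symm
    have haker : -a ∈ S.ker := by
      have := (S.continuous.tendsto (-a)).comp hvlim
      have h2 : Filter.Tendsto (fun n => S (v (φ n))) Filter.atTop (nhds (S (-a))) := this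
      have := tendsto_nhds_unique h2 hS0
      simpa [LinearMap.mem_ker] using this
    have : -a = 0 :=
      Submodule.disjoint_def.mp hWcompl.disjoint (-a) haker haW
    rw [this] at hanorm; simp at hanorm
  obtain ⟨c, hc, hbd⟩ := hbelow
  -- range S = S '' W and it is closed
  rw [← isSeqClosed_iff_isClosed]
  intro x y hx hxy
  choose z hz using fun n => hx n
  have hdecomp : ∀ n, ∃ k ∈ S.ker, ∃ w ∈ W, z n = k + w := by
    intro n
    have := hWcompl.sup_eq_top
    have hz : z n ∈ (⊤ : Submodule ℝ E) := trivial
    rw [← this] at hz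
    obtain ⟨k, hk, w, hw, hkw⟩ := Submodule.mem_sup.mp hz
    exact ⟨k, hk, w, hw, hkw.symm⟩
  choose k hk w hw hzkw using hdecomp
  have hxw : ∀ n, x n = S (w n) := by
    intro n
    rw [← hz n, hzkw n, map_add]
    have : S (k n) = 0 := hk n
    rw [ContinuousLinearMap.coe_coe, this, zero_add]
  have hcauchy : CauchySeq w := by
    rw [Metric.cauchySeq_iff]
    intro ε hε
    have hxc : CauchySeq x := hxy.cauchySeq
    obtain ⟨N, hN⟩ := Metric.cauchySeq_iff.mp hxc (c * ε) (by positivity)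
    refine ⟨N, fun m hm n hn => ?_⟩
    have h1 := hN m hm n hn
    have h2 := hbd (w m - w n) (W.sub_mem (hw m) (hw n))
    rw [dist_eq_norm] at h1 ⊢
    rw [map_sub] at h2
    have : ‖S (w m) - S (w n)‖ = ‖x m - x n‖ := by rw [← hxw m, ← hxw n]
    rw [this] at h2
    nlinarith [norm_nonneg (w m - w n)]
  obtain ⟨l, hl⟩ := cauchySeq_tendsto_of_complete hcauchy
  refine ⟨l, ?_⟩
  have : Filter.Tendsto (fun n => S (w n)) Filter.atTop (nhds (S l)) :=
    (S.continuous.tendsto l).comp hl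
  have hx2 : Filter.Tendsto x Filter.atTop (nhds (S l)) := by
    have heq : (fun n => S (w n)) = x := funext fun n => (hxw n).symm
    rwa [heq] at this
  exact (tendsto_nhds_unique hxy hx2).symm

end RieszTheory2

section RieszTheory3

variable {E : Type*} [NormedAddCommGroup E] [NormedSpace ℝ E]

/-- Powers of `1 + compact` are again `1 + compact`. -/
lemma pow_compact (S : E →L[ℝ] E) (hC : IsCompactOperator fun x => S x - x) (n : ℕ) :
    IsCompactOperator fun x => (S ^ n) x - x := by
  induction n with
  | zero => simp only [pow_zero, ContinuousLinearMap.one_apply, sub_self]; exact isCompactOperator_zero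
  | succ n ih =>
      have heq : (fun x => (S ^ (n+1)) x - x)
          = (fun x => ((fun y => (S ^ n) y - y) ∘ S) x + (S x - x)) := by
        funext x
        simp only [Function.comp]
        have : (S ^ (n+1)) x = (S ^ n) (S x) := by
          rw [pow_succ]
          rfl
        rw [this]; abel
      rw [heq]
      exact (ih.comp_clm S).add hC

lemma ker_pow_mono (S : E →L[ℝ] E) {a b : ℕ} (h : a ≤ b) :
    (S ^ a).ker ≤ (S ^ b).ker := by
  intro x hx
  rw [LinearMap.mem_ker, ContinuousLinearMap.coe_coe] at hx ⊢
  obtain ⟨c, rfl⟩ := Nat.exists_eq_add_of_le h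
  rw [add_comm a c, pow_add, ContinuousLinearMap.mul_apply, hx, map_zero]

lemma range_pow_mono (S : E →L[ℝ] E) {a b : ℕ} (h : a ≤ b) :
    (S ^ b).range ≤ (S ^ a).range := by
  rintro x ⟨y, rfl⟩
  obtain ⟨c, rfl⟩ := Nat.exists_eq_add_of_le h
  refine ⟨(S ^ c) y, ?_⟩
  rw [pow_add, ContinuousLinearMap.coe_coe, ContinuousLinearMap.coe_coe, ContinuousLinearMap.mul_apply]

lemma Spow_apply_mem_ker (S : E →L[ℝ] E) {n : ℕ} {x : E} (hx : x ∈ (S ^ (n+1)).ker) :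
    S x ∈ (S ^ n).ker := by
  rw [LinearMap.mem_ker, ContinuousLinearMap.coe_coe] at hx ⊢
  rw [← ContinuousLinearMap.mul_apply, ← pow_succ]
  exact hx

/-- Finite ascent. -/
lemma exists_ker_pow_stab (S : E →L[ℝ] E) (hC : IsCompactOperator fun x => S x - x) :
    ∃ n, (S ^ (n+1)).ker ≤ (S ^ n).ker := by
  by_contra h
  push_neg at h
  have hx : ∀ n, ∃ x₀ : E, x₀ ∈ (S ^ (n+1)).ker ∧ ‖x₀‖ = 1 ∧
      ∀ y ∈ (S ^ n).ker, (1:ℝ)/2 ≤ ‖x₀ - y‖ := by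
    intro n
    obtain ⟨x, hx1, hx2⟩ := Set.not_subset.mp (h n)
    exact riesz_in _ _ (ContinuousLinearMap.isClosed_ker (S ^ n))
      (ker_pow_mono S n.le_succ) ⟨x, hx1, hx2⟩
  choose x hxk hxn hxd using hx
  obtain ⟨K, hK, hKsub⟩ := compact_image_closedBall hC 1
  have hmem : ∀ n, S (x n) - x n ∈ K := fun n =>
    hKsub ⟨x n, by simp [Metric.mem_closedBall, dist_eq_norm, (hxn n).le], rfl⟩
  apply no_separated_seq_in_compact hK hmem
  intro m n hmn
  have key : (S (x m) - x m) - (S (x n) - x n) = x n - (x m + S (x n) - S (x m)) := by abel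
  rw [key]
  have hy : x m + S (x n) - S (x m) ∈ (S ^ n).ker := by
    have h1 : x m ∈ (S ^ n).ker := ker_pow_mono S hmn (hxk m)
    have h2 : S (x n) ∈ (S ^ n).ker := Spow_apply_mem_ker S (hxk n)
    have h3 : S (x m) ∈ (S ^ n).ker := by
      have := Spow_apply_mem_ker S (hxk m)
      exact ker_pow_mono S (by omega) this
    exact Submodule.sub_mem _ (Submodule.add_mem _ h1 h2) h3
  exact hxd n _ hy

/-- Finite descent. -/
lemma exists_range_pow_stab [CompleteSpace E] (S : E →L[ℝ] E)
    (hC : IsCompactOperator fun x => S x - x) :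
    ∃ n, (S ^ n).range ≤ (S ^ (n+1)).range := by
  by_contra h
  push_neg at h
  have hx : ∀ n, ∃ x₀ : E, x₀ ∈ (S ^ n).range ∧ ‖x₀‖ = 1 ∧
      ∀ y ∈ (S ^ (n+1)).range, (1:ℝ)/2 ≤ ‖x₀ - y‖ := by
    intro n
    obtain ⟨x, hx1, hx2⟩ := Set.not_subset.mp (h n)
    exact riesz_in _ _ (closed_range_of_compact (S ^ (n+1)) (pow_compact S hC (n+1)))
      (range_pow_mono S n.le_succ) ⟨x, hx1, hx2⟩
  choose x hxk hxn hxd using hx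
  obtain ⟨K, hK, hKsub⟩ := compact_image_closedBall hC 1
  have hmem : ∀ n, S (x n) - x n ∈ K := fun n =>
    hKsub ⟨x n, by simp [Metric.mem_closedBall, dist_eq_norm, (hxn n).le], rfl⟩
  apply no_separated_seq_in_compact hK hmem
  intro m n hmn
  have key : (S (x m) - x m) - (S (x n) - x n) = -(x m - (S (x m) - S (x n) + x n)) := by abel
  rw [key, norm_neg]
  have hy : S (x m) - S (x n) + x n ∈ (S ^ (m+1)).range := by
    have h1 : S (x m) ∈ (S ^ (m+1)).range := by
      obtain ⟨y, hy⟩ := hxk m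
      exact ⟨y, by rw [pow_succ', ContinuousLinearMap.coe_coe, ContinuousLinearMap.mul_apply, ← hy, ContinuousLinearMap.coe_coe]⟩
    have h2 : S (x n) ∈ (S ^ (m+1)).range := by
      obtain ⟨y, hy⟩ := hxk n
      apply range_pow_mono S (show m+1 ≤ n+1 by omega)
      exact ⟨y, by rw [pow_succ', ContinuousLinearMap.coe_coe, ContinuousLinearMap.mul_apply, ← hy, ContinuousLinearMap.coe_coe]⟩
    have h3 : x n ∈ (S ^ (m+1)).range := range_pow_mono S hmn (hxk n)
    exact Submodule.add_mem _ (Submodule.sub_mem _ h1 h2) h3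
  exact hxd m _ hy

lemma ker_pow_stab (S : E →L[ℝ] E) {n : ℕ}
    (h : (S ^ (n+1)).ker ≤ (S ^ n).ker) (k : ℕ) :
    (S ^ (n+k)).ker = (S ^ n).ker := by
  induction k with
  | zero => rfl
  | succ k ih =>
      refine le_antisymm ?_ (ker_pow_mono S (by omega))
      intro x hx
      have hSx : S x ∈ (S ^ (n+k)).ker := by
        rw [LinearMap.mem_ker, ContinuousLinearMap.coe_coe] at hx ⊢
        rw [← ContinuousLinearMap.mul_apply, ← pow_succ]
        exact hx
      rw [ih] at hSx
      have hx1 : x ∈ (S ^ (n+1)).ker := by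
        rw [LinearMap.mem_ker, ContinuousLinearMap.coe_coe, pow_succ, ContinuousLinearMap.mul_apply]
        exact hSx
      exact ker_pow_mono S (by omega) (h hx1)

lemma range_pow_stab (S : E →L[ℝ] E) {n : ℕ}
    (h : (S ^ n).range ≤ (S ^ (n+1)).range) (k : ℕ) :
    (S ^ (n+k)).range = (S ^ n).range := by
  induction k with
  | zero => rfl
  | succ k ih =>
      refine le_antisymm (range_pow_mono S (by omega)) ?_
      intro z hz
      rw [← ih] at hz
      obtain ⟨w, rfl⟩ := hz
      have hmem : (S ^ n) w ∈ (S ^ (n+1)).range := h ⟨w, rfl⟩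
      obtain ⟨y, hy⟩ := hmem
      have e1 : (S ^ (n+k)) w = (S ^ k) ((S ^ n) w) := by
        rw [add_comm n k, pow_add, ContinuousLinearMap.mul_apply]
      have e2 : (S ^ (n+(k+1))) y = (S ^ k) ((S ^ (n+1)) y) := by
        rw [show n+(k+1) = k + (n+1) by omega, pow_add, ContinuousLinearMap.mul_apply]
      exact ⟨y, by rw [ContinuousLinearMap.coe_coe] at hy; rw [ContinuousLinearMap.coe_coe, ContinuousLinearMap.coe_coe, e2, hy, ← e1]⟩

end RieszTheory3

section SumClosed

variable {E : Type*} [NormedAddCommGroup E] [NormedSpace ℝ E]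

/-- The sum of a finite-dimensional subspace and a closed subspace is closed. -/
lemma sum_closed_of_findim_closed (V M : Submodule ℝ E) [FiniteDimensional ℝ V]
    (hM : IsClosed (M : Set E)) : IsClosed ((V ⊔ M : Submodule ℝ E) : Set E) := by
  haveI : IsClosed (M : Set E) := hM
  have hcont : Continuous M.mkQ := by
    apply LipschitzWith.continuous (K := 1)
    apply LipschitzWith.of_dist_le_mul
    intro x y
    rw [dist_eq_norm, dist_eq_norm, ← map_sub]
    simpa using Submodule.Quotient.norm_mk_le M (x - y)
  have hset : ((V ⊔ M : Submodule ℝ E) : Set E) = M.mkQ ⁻¹' (V.map M.mkQ : Set (E ⧸ M)) := by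
    have : Submodule.comap M.mkQ (V.map M.mkQ) = V ⊔ M := by
      rw [Submodule.comap_map_eq, Submodule.ker_mkQ]
    rw [← this]
    rfl
  rw [hset]
  haveI : FiniteDimensional ℝ (V.map M.mkQ) := Module.Finite.map V M.mkQ
  exact (Submodule.closed_of_finiteDimensional (V.map M.mkQ)).preimage hcont

end SumClosed

/-- Two-space version: `B₁ ⊆ B₀` Banach with continuous dense embedding `j`,
`R` compact on `B₀` restricting to a compact endomorphism `R₁` of `B₁`; then
every `u` with `u + R u = 0` lies in `B₁`. -/
theorem stmt_1 {B₀ B₁ : Type*}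
    [NormedAddCommGroup B₀] [NormedSpace ℝ B₀] [CompleteSpace B₀]
    [NormedAddCommGroup B₁] [NormedSpace ℝ B₁] [CompleteSpace B₁]
    (j : B₁ →L[ℝ] B₀) (hj : Function.Injective j) (hdense : DenseRange j)
    (R : B₀ →ₗ[ℝ] B₀) (hRc : IsCompactOperator R)
    (R₁ : B₁ →ₗ[ℝ] B₁) (hcomm : ∀ x, j (R₁ x) = R (j x))
    (hR₁c : IsCompactOperator R₁) :
    ∀ u : B₀, u + R u = 0 → u ∈ Set.range j := by
  -- continuous versions
  set Rc : B₀ →L[ℝ] B₀ := ContinuousLinearMap.mkOfIsCompactOperator hRc with hRcdef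
  set R₁c : B₁ →L[ℝ] B₁ := ContinuousLinearMap.mkOfIsCompactOperator hR₁c with hR₁cdef
  have hRc_apply : ∀ x, Rc x = R x := fun x => congrFun (ContinuousLinearMap.coe_mkOfIsCompactOperator hRc) x
  have hR₁c_apply : ∀ x, R₁c x = R₁ x := fun x => congrFun (ContinuousLinearMap.coe_mkOfIsCompactOperator hR₁c) x
  set K₀ : B₀ →L[ℝ] B₀ := 1 + Rc with hK₀def
  set K₁ : B₁ →L[ℝ] B₁ := 1 + R₁c with hK₁def
  have hK₀c : IsCompactOperator fun x => K₀ x - x := by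
    have : (fun x => K₀ x - x) = ⇑R := by
      funext x; simp [hK₀def, hRc_apply]
    rw [this]; exact hRc
  have hK₁c : IsCompactOperator fun x => K₁ x - x := by
    have : (fun x => K₁ x - x) = ⇑R₁ := by
      funext x; simp [hK₁def, hR₁c_apply]
    rw [this]; exact hR₁c
  have hcommK : ∀ x, j (K₁ x) = K₀ (j x) := by
    intro x
    simp [hK₀def, hK₁def, hRc_apply, hR₁c_apply, hcomm x]
  have hcommKn : ∀ n x, j ((K₁ ^ n) x) = (K₀ ^ n) (j x) := by
    intro n
    induction n with
    | zero => intro x; simp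
    | succ n ih =>
        intro x
        have e1 : (K₁ ^ (n+1)) x = (K₁ ^ n) (K₁ x) := by
          rw [pow_succ, ContinuousLinearMap.mul_apply]
        have e2 : (K₀ ^ (n+1)) (j x) = (K₀ ^ n) (K₀ (j x)) := by
          rw [pow_succ, ContinuousLinearMap.mul_apply]
        rw [e1, e2, ih (K₁ x), hcommK x]
  obtain ⟨p, hp⟩ := exists_ker_pow_stab K₀ hK₀c
  obtain ⟨q, hq⟩ := exists_range_pow_stab K₁ hK₁c
  set m : ℕ := p + (q + 1) with hmdef
  clear_value m
  have hker0 : (K₀ ^ (m + m)).ker = (K₀ ^ m).ker := by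
    rw [show m + m = p + (m + q + 1) by omega, ker_pow_stab K₀ hp (m + q + 1),
      ← ker_pow_stab K₀ hp (q + 1), show p + (q + 1) = m by omega]
  have hrange1 : (K₁ ^ m).range = (K₁ ^ (m + m)).range := by
    rw [show m + m = q + (m + p + 1) by omega, range_pow_stab K₁ hq (m + p + 1),
      ← range_pow_stab K₁ hq (p + 1), show q + (p + 1) = m by omega]
  -- the two subspaces
  haveI hfd : FiniteDimensional ℝ ((K₁ ^ m).ker) :=
    findim_ker_of_compact (K₁ ^ m) (pow_compact K₁ hK₁c m)
  set V : Submodule ℝ B₀ := ((K₁ ^ m).ker).map j.toLinearMap with hVdef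
  haveI : FiniteDimensional ℝ V := Module.Finite.map _ _
  set M₀ : Submodule ℝ B₀ := (K₀ ^ m).range with hM₀def
  have hM₀closed : IsClosed (M₀ : Set B₀) :=
    closed_range_of_compact (K₀ ^ m) (pow_compact K₀ hK₀c m)
  have hVM : IsClosed ((V ⊔ M₀ : Submodule ℝ B₀) : Set B₀) :=
    sum_closed_of_findim_closed V M₀ hM₀closed
  -- range j is contained in V ⊔ M₀
  have hsub : Set.range ⇑j ⊆ ((V ⊔ M₀ : Submodule ℝ B₀) : Set B₀) := by
    rintro - ⟨b, rfl⟩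
    have hb : (K₁ ^ m) b ∈ (K₁ ^ (m + m)).range := by
      rw [← hrange1]; exact ⟨b, rfl⟩
    obtain ⟨c, hc⟩ := hb
    have ha : b - (K₁ ^ m) c ∈ (K₁ ^ m).ker := by
      rw [LinearMap.mem_ker, ContinuousLinearMap.coe_coe, map_sub]
      have : (K₁ ^ m) ((K₁ ^ m) c) = (K₁ ^ (m + m)) c := by
        rw [pow_add, ContinuousLinearMap.mul_apply]
      rw [ContinuousLinearMap.coe_coe] at hc; rw [this, hc, sub_self]
    have hsplit : j b = j (b - (K₁ ^ m) c) + j ((K₁ ^ m) c) := by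
      rw [← map_add]; congr 1; abel
    rw [hsplit]
    apply Submodule.add_mem_sup
    · exact ⟨b - (K₁ ^ m) c, ha, rfl⟩
    · rw [hM₀def]
      exact ⟨j c, (hcommKn m c).symm⟩
  have htop : (V ⊔ M₀ : Submodule ℝ B₀) = ⊤ := by
    have hdense' : Dense ((V ⊔ M₀ : Submodule ℝ B₀) : Set B₀) := hdense.mono hsub
    have hset : ((V ⊔ M₀ : Submodule ℝ B₀) : Set B₀) = Set.univ := by
      rw [← hVM.closure_eq, hdense'.closure_eq]
    refine Submodule.eq_top_iff'.mpr fun x => ?_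
    have hx : x ∈ ((V ⊔ M₀ : Submodule ℝ B₀) : Set B₀) := by rw [hset]; trivial
    exact hx
  -- conclude
  intro u hu
  have hK₀u : K₀ u = 0 := by
    rw [hK₀def]; simpa [hRc_apply] using hu
  have humem : u ∈ (K₀ ^ m).ker := by
    apply ker_pow_mono K₀ (show 1 ≤ m by omega)
    rw [LinearMap.mem_ker, pow_one]
    exact hK₀u
  have husum : u ∈ (V ⊔ M₀ : Submodule ℝ B₀) := htop ▸ Submodule.mem_top
  obtain ⟨v, hv, w, hw, hvw⟩ := Submodule.mem_sup.mp husum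
  obtain ⟨a, haker, hva⟩ := hv
  have hKa : (K₁ ^ m) a = 0 := haker
  have hKv : (K₀ ^ m) v = 0 := by
    have hva' : (K₀ ^ m) v = (K₀ ^ m) (j a) := by rw [← hva]; rfl
    rw [hva', ← hcommKn m a, hKa, map_zero]
  have hKu : (K₀ ^ m) u = 0 := humem
  have hKw : (K₀ ^ m) w = 0 := by
    have hwd : w = u - v := by rw [← hvw]; abel
    rw [hwd, map_sub, hKu, hKv, sub_self]
  have hw0 : w = 0 := by
    obtain ⟨y, hy⟩ := hw
    have : y ∈ (K₀ ^ (m + m)).ker := by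
      rw [LinearMap.mem_ker, ContinuousLinearMap.coe_coe, pow_add, ContinuousLinearMap.mul_apply, ← ContinuousLinearMap.coe_coe (K₀ ^ m), hy]
      exact hKw
    rw [hker0, LinearMap.mem_ker] at this
    rw [← hy, this]
  have : u = j a := by rw [← hvw, hw0, add_zero, ← hva]; rfl
  exact ⟨a, this.symm⟩
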